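/- There exist squarefree words over the ternary alphabet {0,1,2} of every length n ≥ 0; equivalently, there are infinitely many ternary squarefree words. -/

import Mathlib

/-- A word is squarefree if it contains no factor `x ++ x` with `x` nonempty. -/
def IsSquarefreeWord {α : Type*} (w : List α) : Prop :=
  ∀ x : List α, x ≠ [] → ¬ ∃ a b : List α, w = a ++ x ++ x ++ b

namespace TSF

/-- an 11-uniform squarefree morphism -/
def mo : Fin 3 → List (Fin 3)
  | 0 => [0,1,0,2,0,1,2,1,0,1,2]
  | 1 => [0,2,1,0,1,2,1,0,2,1,2]
  | 2 => [0,2,1,0,2,0,1,0,2,1,2]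

def Hm : List (Fin 3) → List (Fin 3)
  | [] => []
  | c :: w => mo c ++ Hm w

/-- pointwise squarefreeness -/
def SFP (w : List (Fin 3)) : Prop :=
  ∀ p i : ℕ, 0 < p → i + 2*p ≤ w.length →
    ∃ j, j < p ∧ w.getD (i+j) 0 ≠ w.getD (i+p+j) 0

/-- boolean squarefreeness check -/
def chk (w : List (Fin 3)) : Bool :=
  (List.range (w.length)).all fun p =>
    (List.range (w.length + 1)).all fun i =>
      decide (p = 0) || decide (w.length < i + 2*p) ||
        !((w.drop i).take p == (w.drop (i+p)).take p)

lemma gd {w : List (Fin 3)} {i p j : ℕ} (hj : j < p) (hlen : i + p ≤ w.length) :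
    ((w.drop i).take p).getD j 0 = w.getD (i+j) 0 := by
  have hlt : j < ((w.drop i).take p).length := by
    simp [List.length_take, List.length_drop]; omega
  rw [List.getD_eq_getElem _ _ hlt, List.getElem_take, List.getElem_drop,
    List.getD_eq_getElem w 0 (show i + j < w.length by omega)]

lemma g1 {w : List (Fin 3)} {p i : ℕ} (hle : i + 2*p ≤ w.length)
    (hsq : ∀ j, j < p → w.getD (i+j) 0 = w.getD (i+p+j) 0) :
    (w.drop i).take p = (w.drop (i+p)).take p := by
  apply List.ext_getElem
  · simp [List.length_take, List.length_drop]; omega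
  · intro n h1 h2
    have hn : n < p := by simp [List.length_take, List.length_drop] at h1; omega
    rw [← List.getD_eq_getElem _ 0 h1, ← List.getD_eq_getElem _ 0 h2,
      gd hn (by omega), gd hn (by omega)]
    have := hsq n hn
    rwa [show i + p + n = (i+p) + n by omega] at this

lemma g2 {w : List (Fin 3)} {p i : ℕ} (hle : i + 2*p ≤ w.length)
    (heq : (w.drop i).take p = (w.drop (i+p)).take p) :
    ∀ j, j < p → w.getD (i+j) 0 = w.getD (i+p+j) 0 := by
  intro j hj
  have := congrArg (fun l : List (Fin 3) => l.getD j 0) heq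
  simp only [gd hj (show i + p ≤ w.length by omega),
    gd hj (show (i+p) + p ≤ w.length by omega)] at this
  rwa [show i + p + j = (i+p) + j by omega]

lemma chk_iff {w : List (Fin 3)} : chk w = true ↔ SFP w := by
  unfold chk
  simp only [List.all_eq_true, List.mem_range, Bool.or_eq_true, decide_eq_true_eq,
    Bool.not_eq_true', beq_eq_false_iff_ne, ne_eq]
  constructor
  · intro H p i hp hle
    have := H p (by omega) i (by omega)
    by_contra hc
    push_neg at hc
    rcases this with (h | h) | h
    · omega
    · omega
    · exact h (g1 hle hc)
  · intro H p hp i hi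
    by_cases h0 : p = 0
    · exact Or.inl (Or.inl h0)
    by_cases h1 : w.length < i + 2*p
    · exact Or.inl (Or.inr h1)
    refine Or.inr fun hc => ?_
    obtain ⟨j, hj, hne⟩ := H p i (Nat.pos_of_ne_zero h0) (by omega)
    exact hne (g2 (by omega) hc j hj)

lemma SFP_factor {a v b : List (Fin 3)} (hw : SFP (a ++ v ++ b)) : SFP v := by
  intro p i hp hle
  obtain ⟨j, hj, hne⟩ := hw p (a.length + i) hp
    (by simp [List.length_append]; omega)
  refine ⟨j, hj, fun hc => hne ?_⟩
  have key : ∀ t, t < v.length → (a ++ v ++ b).getD (a.length + t) 0 = v.getD t 0 := by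
    intro t ht
    rw [List.append_assoc, List.getD_append_right _ _ _ _ (by omega),
      show a.length + t - a.length = t by omega, List.getD_append _ _ _ _ ht]
  rw [show a.length + i + j = a.length + (i + j) by omega,
    show a.length + i + p + j = a.length + (i + p + j) by omega,
    key _ (by omega), key _ (by omega)]
  exact hc

lemma SFP_take {w : List (Fin 3)} (hw : SFP w) (n : ℕ) : SFP (w.take n) := by
  have : w = [] ++ w.take n ++ w.drop n := by simp [List.take_append_drop]
  exact SFP_factor (this ▸ hw)

lemma Hm_append (u v : List (Fin 3)) : Hm (u ++ v) = Hm u ++ Hm v := by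
  induction u with
  | nil => simp [Hm]
  | cons c t ih => simp [Hm, ih]

lemma len_mo : ∀ c, (mo c).length = 11 := by decide

lemma len_Hm (w : List (Fin 3)) : (Hm w).length = 11 * w.length := by
  induction w with
  | nil => simp [Hm]
  | cons c t ih => simp [Hm, List.length_append, ih, len_mo]; ring

lemma getD_Hm : ∀ (w : List (Fin 3)) (q s : ℕ), q < w.length → s < 11 →
    (Hm w).getD (11*q + s) 0 = (mo (w.getD q 0)).getD s 0 := by
  intro w
  induction w with
  | nil => intro q s hq _; simp at hq
  | cons c t ih =>
    intro q s hq hs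
    cases q with
    | zero =>
      simp only [Hm, Nat.mul_zero, Nat.zero_add]
      rw [List.getD_append _ _ _ _ (by rw [len_mo]; omega)]
      rfl
    | succ q' =>
      have h1 : 11 * (q' + 1) + s = 11 + (11 * q' + s) := by ring
      simp only [Hm, h1]
      rw [List.getD_append_right _ _ _ _ (by rw [len_mo]; omega),
        show 11 + (11*q'+s) - (mo c).length = 11*q' + s by rw [len_mo]; omega]
      have : (c :: t).getD (q'+1) 0 = t.getD q' 0 := rfl
      rw [this]
      exact ih q' s (by simpa using hq) hs

end TSF
namespace TSF

lemma fact_inj : ∀ c c' : Fin 3,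
    (∀ s, s < 11 → (mo c).getD s 0 = (mo c').getD s 0) → c = c' := by decide

lemma fact_H2 : ∀ (c c1 c2 : Fin 3), c1 ≠ c2 → ∀ r, r < 11 → 0 < r →
    ¬ (∀ s, s < 11 → (mo c).getD s 0 = (mo c1 ++ mo c2).getD (r + s) 0) := by decide

lemma fact_H4 : ∀ r < 11, ∀ c c' c'' : Fin 3,
    (mo c').take r = (mo c'').take r → (mo c').drop r = (mo c).drop r →
    c = c' ∨ c' = c'' := by decide

lemma take_ext {c c' : Fin 3} {r : ℕ}
    (h : ∀ s, s < r → (mo c).getD s 0 = (mo c').getD s 0) :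
    (mo c).take r = (mo c').take r := by
  apply List.ext_getElem
  · simp [len_mo]
  · intro n h1 h2
    have hn : n < r ∧ n < 11 := by
      simp [List.length_take, len_mo] at h1; omega
    rw [List.getElem_take, List.getElem_take,
      ← List.getD_eq_getElem _ 0 (by rw [len_mo]; omega),
      ← List.getD_eq_getElem _ 0 (by rw [len_mo]; omega)]
    exact h n hn.1

lemma drop_ext {c c' : Fin 3} {r : ℕ}
    (h : ∀ s, s < 11 → r ≤ s → (mo c).getD s 0 = (mo c').getD s 0) :
    (mo c).drop r = (mo c').drop r := by
  apply List.ext_getElem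
  · simp [len_mo]
  · intro n h1 h2
    have hn : r + n < 11 := by
      simp [List.length_drop, len_mo] at h1; omega
    rw [List.getElem_drop, List.getElem_drop,
      ← List.getD_eq_getElem _ 0 (by rw [len_mo]; omega),
      ← List.getD_eq_getElem _ 0 (by rw [len_mo]; omega)]
    exact h (r+n) hn (by omega)

lemma fact1 : ∀ a : Fin 3, chk [a] = true → chk (Hm [a]) = true := by decide
set_option maxRecDepth 100000 in
set_option maxHeartbeats 1000000 in
lemma fact2 : ∀ a b : Fin 3, chk [a,b] = true → chk (Hm [a,b]) = true := by decide

set_option maxRecDepth 100000 in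
set_option maxHeartbeats 2000000 in
lemma fact3 : ∀ a b c : Fin 3, chk [a,b,c] = true → chk (Hm [a,b,c]) = true := by decide

set_option maxRecDepth 100000 in
set_option maxHeartbeats 4000000 in
lemma fact4 : ∀ a b c d : Fin 3, chk [a,b,c,d] = true → chk (Hm [a,b,c,d]) = true := by decide

lemma win_chk : ∀ v : List (Fin 3), v.length ≤ 4 → chk v = true → chk (Hm v) = true := by
  intro v hlen hchk
  rcases v with _ | ⟨a, _ | ⟨b, _ | ⟨c, _ | ⟨d, _ | ⟨e, t⟩⟩⟩⟩⟩
  · decide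
  · exact fact1 a hchk
  · exact fact2 a b hchk
  · exact fact3 a b c hchk
  · exact fact4 a b c d hchk
  · simp [List.length_cons] at hlen; omega

lemma sync {w : List (Fin 3)} (hw : SFP w) (c : Fin 3) (j0 : ℕ)
    (hle : j0 + 11 ≤ 11 * w.length)
    (hocc : ∀ s, s < 11 → (Hm w).getD (j0 + s) 0 = (mo c).getD s 0) :
    j0 % 11 = 0 := by
  by_contra hr
  have hdm : 11 * (j0 / 11) + j0 % 11 = j0 := Nat.div_add_mod j0 11
  set m0 := j0 / 11 with hm0
  set r0 := j0 % 11 with hr0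
  have hr11 : r0 < 11 := Nat.mod_lt _ (by norm_num)
  have hm1 : m0 + 1 < w.length := by omega
  obtain ⟨j, hj, hne⟩ := hw 1 m0 one_pos (by omega)
  have hj0 : j = 0 := by omega
  subst hj0
  have hadj : w.getD m0 0 ≠ w.getD (m0 + 1) 0 := by
    simpa using hne
  apply fact_H2 c (w.getD m0 0) (w.getD (m0+1) 0) hadj r0 hr11 (by omega)
  intro s hs
  rw [← hocc s hs]
  by_cases hcase : r0 + s < 11
  · rw [List.getD_append _ _ _ _ (by rw [len_mo]; omega)]
    have h1 := getD_Hm w m0 (r0 + s) (by omega) hcase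
    rw [show 11 * m0 + (r0 + s) = j0 + s by omega] at h1
    exact h1
  · rw [List.getD_append_right _ _ _ _ (by rw [len_mo]; omega), len_mo]
    have h1 := getD_Hm w (m0+1) (r0 + s - 11) (by omega) (by omega)
    rw [show 11 * (m0+1) + (r0 + s - 11) = j0 + s by omega] at h1
    exact h1

theorem SFP_Hm {w : List (Fin 3)} (hw : SFP w) : SFP (Hm w) := by
  intro p i hp hle
  by_contra hcon
  push_neg at hcon
  have hc : ∀ j, j < p → (Hm w).getD (i+j) 0 = (Hm w).getD (i+p+j) 0 := hcon
  rw [len_Hm] at hle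
  have hdm : 11 * (i / 11) + i % 11 = i := Nat.div_add_mod i 11
  set q := i / 11 with hqdef
  set r := i % 11 with hrdef
  have hr11 : r < 11 := Nat.mod_lt _ (by norm_num)
  have hqlen : q < w.length := by omega
  by_cases hsmall : p ≤ 11 ∨ (0 < r ∧ p + r < 22)
  · -- window case
    have hb : r + 2*p ≤ 43 := by rcases hsmall with h | ⟨h1, h2⟩ <;> omega
    set v := (w.drop q).take 4 with hv
    have hvlen : v.length = min 4 (w.length - q) := by
      simp [hv, List.length_take, List.length_drop]
    have hv4 : v.length = 4 ∨ v.length = w.length - q := by omega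
    have hbound : i - 11*q + 2*p ≤ 11 * v.length := by
      rcases hv4 with h | h <;> omega
    have hdecomp : w = w.take q ++ v ++ (w.drop q).drop 4 := by
      have h1 : (w.drop q).take 4 ++ (w.drop q).drop 4 = w.drop q :=
        List.take_append_drop 4 (w.drop q)
      rw [hv, List.append_assoc, h1, List.take_append_drop]
    have hsfv : SFP v := by
      have h := hw; rw [hdecomp] at h; exact SFP_factor h
    have hAlen : (Hm (w.take q)).length = 11 * q := by
      rw [len_Hm, List.length_take]
      have : min q w.length = q := by omega
      rw [this]
    have hHm2 : Hm w = Hm (w.take q) ++ (Hm v ++ Hm ((w.drop q).drop 4)) := by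
      conv_lhs => rw [hdecomp]
      rw [Hm_append, Hm_append, List.append_assoc]
    have htrans : ∀ t, t < 11 * v.length →
        (Hm w).getD (11*q + t) 0 = (Hm v).getD t 0 := by
      intro t ht
      rw [hHm2, List.getD_append_right _ _ _ _
        (show (Hm (w.take q)).length ≤ 11*q + t by rw [hAlen]; omega),
        hAlen, show 11*q + t - 11*q = t by omega,
        List.getD_append _ _ _ _ (by rw [len_Hm]; omega)]
    have hsfHv : SFP (Hm v) := chk_iff.mp (win_chk v (by omega) (chk_iff.mpr hsfv))
    obtain ⟨j, hj, hne⟩ := hsfHv p (i - 11*q) hp (by rw [len_Hm]; omega)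
    apply hne
    have e1 := htrans ((i - 11*q) + j) (by omega)
    have e2 := htrans ((i - 11*q) + p + j) (by omega)
    rw [show 11*q + (i - 11*q + j) = i + j by omega] at e1
    rw [show 11*q + (i - 11*q + p + j) = i + p + j by omega] at e2
    rw [← e1, ← e2]
    exact hc j hj
  · -- structural case
    push_neg at hsmall
    obtain ⟨hp11, himp⟩ := hsmall
    have hp11' : 11 < p := hp11
    rcases Nat.eq_zero_or_pos r with hr0 | hrpos
    · -- r = 0
      have hi : i = 11 * q := by omega
      have hocc : ∀ s, s < 11 → (Hm w).getD ((11*q + p) + s) 0 = (mo (w.getD q 0)).getD s 0 := by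
        intro s hs
        have e := hc s (by omega)
        rw [show i + p + s = 11*q + p + s by omega] at e
        rw [← e, show i + s = 11*q + s by omega]
        exact getD_Hm w q s hqlen hs
      have hdvd := sync hw (w.getD q 0) (11*q + p) (by omega) hocc
      have hm : p = 11 * (p / 11) := by omega
      set m := p / 11 with hmdef
      have hm2 : 2 ≤ m := by omega
      have hrep : ∀ t, t < m → w.getD (q + t) 0 = w.getD (q + m + t) 0 := by
        intro t ht
        apply fact_inj
        intro s hs
        have h1 := getD_Hm w (q+t) s (by omega) hs
        have h2 := getD_Hm w (q+m+t) s (by omega) hs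
        have e := hc (11*t + s) (by omega)
        rw [show i + (11*t + s) = 11*(q+t) + s by omega,
          show i + p + (11*t + s) = 11*(q+m+t) + s by omega] at e
        rw [← h1, ← h2]
        exact e
      obtain ⟨j, hj, hne⟩ := hw m q (by omega) (by omega)
      exact hne (hrep j hj)
    · -- r > 0
      have hr22 : 22 ≤ p + r := himp hrpos
      have hocc : ∀ s, s < 11 → (Hm w).getD ((11*(q+1) + p) + s) 0 = (mo (w.getD (q+1) 0)).getD s 0 := by
        intro s hs
        have e := hc (11 - r + s) (by omega)
        rw [show i + p + (11 - r + s) = 11*(q+1) + p + s by omega] at e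
        rw [← e, show i + (11 - r + s) = 11*(q+1) + s by omega]
        exact getD_Hm w (q+1) s (by omega) hs
      have hdvd := sync hw (w.getD (q+1) 0) (11*(q+1) + p) (by omega) hocc
      have hm : p = 11 * (p / 11) := by omega
      set m := p / 11 with hmdef
      have hm2 : 2 ≤ m := by omega
      have hq2m : q + 2*m < w.length := by omega
      have hrep : ∀ t, t < m - 1 → w.getD (q+1+t) 0 = w.getD (q+1+m+t) 0 := by
        intro t ht
        apply fact_inj
        intro s hs
        have h1 := getD_Hm w (q+1+t) s (by omega) hs
        have h2 := getD_Hm w (q+1+m+t) s (by omega) hs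
        have e := hc (11 - r + 11*t + s) (by omega)
        rw [show i + (11 - r + 11*t + s) = 11*(q+1+t) + s by omega,
          show i + p + (11 - r + 11*t + s) = 11*(q+1+m+t) + s by omega] at e
        rw [← h1, ← h2]
        exact e
      have hpre : ∀ s, s < r → (mo (w.getD (q+m) 0)).getD s 0 = (mo (w.getD (q+2*m) 0)).getD s 0 := by
        intro s hs
        have h1 := getD_Hm w (q+m) s (by omega) (by omega)
        have h2 := getD_Hm w (q+2*m) s (by omega) (by omega)
        have e := hc (11*m - r + s) (by omega)
        rw [show i + (11*m - r + s) = 11*(q+m) + s by omega,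
          show i + p + (11*m - r + s) = 11*(q+2*m) + s by omega] at e
        rw [← h1, ← h2]
        exact e
      have hsuf : ∀ s, s < 11 → r ≤ s → (mo (w.getD (q+m) 0)).getD s 0 = (mo (w.getD q 0)).getD s 0 := by
        intro s hs hrs
        have h1 := getD_Hm w q s (by omega) hs
        have h2 := getD_Hm w (q+m) s (by omega) hs
        have e := hc (s - r) (by omega)
        rw [show i + (s - r) = 11*q + s by omega,
          show i + p + (s - r) = 11*(q+m) + s by omega] at e
        rw [← h1, ← h2]
        exact e.symm
      rcases fact_H4 r hr11 (w.getD q 0) (w.getD (q+m) 0) (w.getD (q+2*m) 0)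
        (take_ext hpre) (drop_ext hsuf) with hcc | hcc
      · obtain ⟨j, hj, hne⟩ := hw m q (by omega) (by omega)
        apply hne
        rcases Nat.eq_zero_or_pos j with h0 | hjpos
        · rw [h0]
          simpa using hcc
        · have h := hrep (j-1) (by omega)
          rw [show q+1+(j-1) = q + j by omega, show q+1+m+(j-1) = q + m + j by omega] at h
          exact h
      · obtain ⟨j, hj, hne⟩ := hw m (q+1) (by omega) (by omega)
        apply hne
        by_cases hjm : j = m - 1
        · rw [hjm, show q+1+(m-1) = q + m by omega, show q+1+m+(m-1) = q + 2*m by omega]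
          exact hcc
        · exact hrep j (by omega)

end TSF
namespace TSF

lemma IsSq_of_SFP {w : List (Fin 3)} (hw : SFP w) : IsSquarefreeWord w := by
  intro x hx hex
  obtain ⟨a, b, hab⟩ := hex
  have hxlen : 0 < x.length := List.length_pos_iff.mpr hx
  have hab' : w = a ++ (x ++ (x ++ b)) := by rw [hab]; simp [List.append_assoc]
  have hwlen : w.length = a.length + x.length + x.length + b.length := by
    rw [hab']; simp [List.length_append]; omega
  obtain ⟨j, hj, hne⟩ := hw x.length a.length hxlen (by omega)
  apply hne
  have k1 : w.getD (a.length + j) 0 = x.getD j 0 := by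
    rw [hab', List.getD_append_right _ _ _ _ (by omega),
      show a.length + j - a.length = j by omega, List.getD_append _ _ _ _ hj]
  have k2 : w.getD (a.length + x.length + j) 0 = x.getD j 0 := by
    rw [hab', List.getD_append_right _ _ _ _ (by omega),
      show a.length + x.length + j - a.length = x.length + j by omega,
      List.getD_append_right _ _ _ _ (by omega),
      show x.length + j - x.length = j by omega, List.getD_append _ _ _ _ hj]
  rw [k1, k2]

def W : ℕ → List (Fin 3)
  | 0 => [0]
  | n+1 => Hm (W n)

lemma W_len : ∀ n, (W n).length = 11 ^ n := by
  intro n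
  induction n with
  | zero => rfl
  | succ n ih => rw [show W (n+1) = Hm (W n) from rfl, len_Hm, ih, pow_succ]; ring

lemma W_SFP : ∀ n, SFP (W n) := by
  intro n
  induction n with
  | zero =>
    intro p i hp hle
    simp [W] at hle
    omega
  | succ n ih => exact SFP_Hm ih

end TSF

theorem ternary_squarefree_all_lengths :
    (∀ n : ℕ, ∃ w : List (Fin 3), w.length = n ∧ IsSquarefreeWord w) ∧
    {w : List (Fin 3) | IsSquarefreeWord w}.Infinite := by
  have part1 : ∀ n : ℕ, ∃ w : List (Fin 3), w.length = n ∧ IsSquarefreeWord w := by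
    intro n
    refine ⟨(TSF.W n).take n, ?_, TSF.IsSq_of_SFP (TSF.SFP_take (TSF.W_SFP n) n)⟩
    rw [List.length_take, TSF.W_len]
    have h : n < 11 ^ n := Nat.lt_pow_self (by norm_num : 1 < 11)
    omega
  refine ⟨part1, ?_⟩
  choose f hf1 hf2 using part1
  apply Set.infinite_of_injective_forall_mem (f := f)
  · intro a b hab
    have := congrArg List.length hab
    rwa [hf1 a, hf1 b] at this
  · intro n
    exact hf2 n
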